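/- arXiv:0705.2270 — 2 statements merged into one kernel-verified Lean document; each statement's English description precedes it below -/
import Mathlib

section
/- Let n ≥ 1 and let ξ_1, ξ_2, ξ_3 be independent random vectors, each uniformly distributed on the unit sphere of ℂ^n, and let Ξ = [ξ_1 ξ_2 ξ_3]. Then for every constant c > 0: E[det(I_3 + c·Ξ†Ξ)] = (1+c)³ − 3c²(1+c)/n + 2c³/n². -/
open MeasureTheory ProbabilityTheory Filter Finset Matrix

/-- The Gram matrix `Ξ†Ξ` of the matrix `Ξ` with columns `ξ 0, …, ξ (k-1)` in `ℂ^n`. -/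
noncomputable def grammat {n k : ℕ} (ξ : Fin k → (Fin n → ℂ)) : Matrix (Fin k) (Fin k) ℂ :=
  (Matrix.of fun i j => ξ j i)ᴴ * (Matrix.of fun i j => ξ j i)

/-- `μ` is the uniform distribution on the unit sphere of `ℂ^n`: a probability measure,
carried by the unit sphere, invariant under the unitary group. -/
def IsUniformSphere (n : ℕ) (μ : Measure (Fin n → ℂ)) : Prop :=
  IsProbabilityMeasure μ ∧
  (∀ᵐ v ∂μ, ∑ i, Complex.normSq (v i) = 1) ∧
  ∀ U : Matrix.unitaryGroup (Fin n) ℂ,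
    Measure.map (fun v => (U : Matrix (Fin n) (Fin n) ℂ).mulVec v) μ = μ

noncomputable section
abbrev V (n : ℕ) := Fin n → ℂ

variable {n : ℕ} {μ : Measure (V n)}

open ComplexConjugate in
lemma meas_mon1 (i j : Fin n) : Measurable (fun v : V n => v i * conj (v j)) :=
  (measurable_pi_apply i).mul (continuous_star.measurable.comp (measurable_pi_apply j))

open ComplexConjugate in
lemma meas_mon2 (i j : Fin n) : Measurable (fun v : V n => conj (v i) * v j) :=
  Measurable.mul (f := fun v : V n => conj (v i)) (g := fun v : V n => v j)
    (continuous_star.measurable.comp (measurable_pi_apply i)) (measurable_pi_apply j)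

open ComplexConjugate in
lemma abs_coord_le (hμ : IsUniformSphere n μ) (i : Fin n) :
    ∀ᵐ v ∂μ, ‖v i‖ ≤ 1 := by
  filter_upwards [hμ.2.1] with v hv
  have h1 : Complex.normSq (v i) ≤ 1 := by
    rw [← hv]
    exact Finset.single_le_sum (f := fun k => Complex.normSq (v k)) (fun k _ => Complex.normSq_nonneg _)
      (Finset.mem_univ i)
  nlinarith [Complex.sq_norm (v i), norm_nonneg (v i)]

open ComplexConjugate in
lemma intm1 (hμ : IsUniformSphere n μ) (i j : Fin n) :
    Integrable (fun v : V n => v i * conj (v j)) μ := by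
  haveI := hμ.1
  refine Integrable.mono' (integrable_const 1) (meas_mon1 i j).aestronglyMeasurable ?_
  filter_upwards [abs_coord_le hμ i, abs_coord_le hμ j] with v h1 h2
  simp only [norm_mul, Complex.norm_conj]
  nlinarith [norm_nonneg (v i), norm_nonneg (v j)]

open ComplexConjugate in
lemma intm2 (hμ : IsUniformSphere n μ) (i j : Fin n) :
    Integrable (fun v : V n => conj (v i) * v j) μ := by
  haveI := hμ.1
  refine Integrable.mono' (integrable_const 1) (meas_mon2 i j).aestronglyMeasurable ?_
  filter_upwards [abs_coord_le hμ i, abs_coord_le hμ j] with v h1 h2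
  simp only [norm_mul, Complex.norm_conj]
  nlinarith [norm_nonneg (v i), norm_nonneg (v j)]

lemma inv_int (hμ : IsUniformSphere n μ) (U : Matrix.unitaryGroup (Fin n) ℂ)
    (f : V n → ℂ) (hf : AEStronglyMeasurable f μ) :
    ∫ v, f ((U : Matrix (Fin n) (Fin n) ℂ).mulVec v) ∂μ = ∫ v, f v ∂μ := by
  have hm : Measurable (fun v : V n => (U : Matrix (Fin n) (Fin n) ℂ).mulVec v) := by
    apply measurable_pi_lambda
    intro a
    have : (fun v : V n => (U : Matrix (Fin n) (Fin n) ℂ).mulVec v a)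
        = fun v : V n => ∑ j, (U : Matrix (Fin n) (Fin n) ℂ) a j * v j := rfl
    rw [this]
    exact Finset.measurable_sum _ fun j _ => (measurable_pi_apply j).const_mul _
  conv_rhs => rw [← hμ.2.2 U]
  rw [integral_map hm.aemeasurable]
  rw [hμ.2.2 U]
  exact hf

open ComplexConjugate in
lemma mom_offdiag (hμ : IsUniformSphere n μ) (i j : Fin n) (hij : i ≠ j) :
    ∫ v, v i * conj (v j) ∂μ = 0 := by
  set d : Fin n → ℂ := fun k => if k = i then -1 else 1 with hd
  have hU : Matrix.diagonal d ∈ Matrix.unitaryGroup (Fin n) ℂ := by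
    rw [Matrix.mem_unitaryGroup_iff]
    have : star (Matrix.diagonal d) = Matrix.diagonal (star d) := Matrix.diagonal_conjTranspose d
    rw [this, Matrix.diagonal_mul_diagonal]
    ext a b
    by_cases hab : a = b
    · subst hab
      simp only [hd, Matrix.diagonal_apply_eq, Pi.mul_apply, Pi.star_apply,
        Matrix.one_apply_eq]
      split_ifs <;> simp
    · simp [Matrix.diagonal_apply_ne _ hab, Matrix.one_apply_ne hab]
  have key := inv_int hμ ⟨Matrix.diagonal d, hU⟩ (fun v => v i * conj (v j))
    (meas_mon1 i j).aestronglyMeasurable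
  simp only [Matrix.mulVec_diagonal] at key
  have heq : ∀ v : V n, d i * v i * conj (d j * v j) = -(v i * conj (v j)) := by
    intro v
    simp [hd, if_neg hij.symm]
  rw [show (fun v : V n => d i * v i * conj (d j * v j)) = fun v : V n => -(v i * conj (v j))
    from funext heq] at key
  rw [integral_neg] at key
  linear_combination (-1/2 : ℂ) * key

open ComplexConjugate in
lemma perm_int (hμ : IsUniformSphere n μ) (σ : Equiv.Perm (Fin n)) (f : V n → ℂ)
    (hf : AEStronglyMeasurable f μ) :
    ∫ v, f (fun a => v (σ a)) ∂μ = ∫ v, f v ∂μ := by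
  set U : Matrix (Fin n) (Fin n) ℂ := Matrix.of fun a b => if σ a = b then 1 else 0 with hUdef
  have hU : U ∈ Matrix.unitaryGroup (Fin n) ℂ := by
    rw [Matrix.mem_unitaryGroup_iff]
    ext a b
    simp only [Matrix.mul_apply, Matrix.star_apply, hUdef, Matrix.of_apply,
      apply_ite (star : ℂ → ℂ), star_one, star_zero, mul_ite, mul_one, mul_zero, ite_mul, one_mul, zero_mul]
    by_cases hab : a = b
    · subst hab
      simp [Matrix.one_apply_eq]
    · rw [Matrix.one_apply_ne hab, Finset.sum_eq_zero]
      intro k _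
      by_cases h1 : σ a = k
      · rw [if_pos h1, if_neg]
        intro h2
        exact hab (σ.injective (h1.trans h2.symm))
      · simp [if_neg h1]
  have hmv : ∀ v : V n, U.mulVec v = fun a => v (σ a) := by
    intro v
    funext a
    simp [hUdef, Matrix.mulVec, dotProduct]
  have key := inv_int hμ ⟨U, hU⟩ f hf
  simp only at key
  rw [← key]
  congr 1
  funext v
  rw [hmv v]

open ComplexConjugate in
lemma mom_diag (hμ : IsUniformSphere n μ) (i : Fin n) :
    ∫ v, v i * conj (v i) ∂μ = (n : ℂ)⁻¹ := by
  haveI := hμ.1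
  have hs : ∀ j : Fin n, ∫ v, v j * conj (v j) ∂μ = ∫ v, v i * conj (v i) ∂μ := by
    intro j
    have := perm_int hμ (Equiv.swap i j) (fun v => v i * conj (v i))
      (meas_mon1 i i).aestronglyMeasurable
    simp only [Equiv.swap_apply_left] at this
    exact this
  have hsum : ∑ j : Fin n, ∫ v, v j * conj (v j) ∂μ = 1 := by
    rw [← integral_finset_sum _ (fun j _ => intm1 hμ j j)]
    have : ∀ᵐ v ∂μ, ∑ j : Fin n, v j * conj (v j) = (1 : ℂ) := by
      filter_upwards [hμ.2.1] with v hv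
      simp only [Complex.mul_conj]
      rw [← Complex.ofReal_sum]
      norm_cast
    rw [integral_congr_ae this, integral_const]
    simp
  rw [Finset.sum_congr rfl (fun j _ => hs j), Finset.sum_const, Finset.card_univ,
    Fintype.card_fin] at hsum
  have hn : (n : ℂ) ≠ 0 := by
    have : 0 < n := i.pos
    exact_mod_cast Nat.cast_ne_zero.mpr this.ne'
  field_simp
  rw [nsmul_eq_mul] at hsum
  linear_combination hsum

open ComplexConjugate in
lemma mom (hμ : IsUniformSphere n μ) (i j : Fin n) :
    ∫ v, v i * conj (v j) ∂μ = if i = j then (n : ℂ)⁻¹ else 0 := by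
  by_cases h : i = j
  · subst h; rw [if_pos rfl]; exact mom_diag hμ i
  · rw [if_neg h]; exact mom_offdiag hμ i j h

open ComplexConjugate in
lemma mom' (hμ : IsUniformSphere n μ) (i j : Fin n) :
    ∫ v, conj (v i) * v j ∂μ = if i = j then (n : ℂ)⁻¹ else 0 := by
  have : (fun v : V n => conj (v i) * v j) = fun v : V n => conj (v i * conj (v j)) := by
    funext v; simp [mul_comm]
  rw [this, integral_conj, mom hμ i j]
  split_ifs <;> simp

open ComplexConjugate

lemma prod3 (μ : Measure (V n)) [IsProbabilityMeasure μ] (f g h : V n → ℂ)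
    (hf : Integrable f μ) (hg : Integrable g μ) (hh : Integrable h μ) :
    ∫ ξ : Fin 3 → V n, f (ξ 0) * g (ξ 1) * h (ξ 2) ∂(Measure.pi fun _ => μ)
      = (∫ v, f v ∂μ) * (∫ v, g v ∂μ) * (∫ v, h v ∂μ) := by
  letI : MeasureSpace (V n) := ⟨μ⟩
  have hvol : (Measure.pi fun _ : Fin 3 => μ) = (volume : Measure (Fin 3 → V n)) := by
    rw [MeasureTheory.volume_pi]; rfl
  rw [hvol]
  have := MeasureTheory.integral_fintype_prod_eq_prod (ι := Fin 3) (f := ![f, g, h]) (μ := fun _ => μ)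
  simpa [Fin.prod_univ_three, hvol] using this

lemma int3 (μ : Measure (V n)) [IsProbabilityMeasure μ] (f g h : V n → ℂ)
    (hf : Integrable f μ) (hg : Integrable g μ) (hh : Integrable h μ) :
    Integrable (fun ξ : Fin 3 → V n => f (ξ 0) * g (ξ 1) * h (ξ 2)) (Measure.pi fun _ => μ) := by
  letI : MeasureSpace (V n) := ⟨μ⟩
  have hvol : (Measure.pi fun _ : Fin 3 => μ) = (volume : Measure (Fin 3 → V n)) := by
    rw [MeasureTheory.volume_pi]; rfl
  rw [hvol]
  have := MeasureTheory.Integrable.fintype_prod (ι := Fin 3) (f := ![f, g, h]) (μ := fun _ => μ)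
    (fun i => by fin_cases i <;> assumption)
  simpa [Fin.prod_univ_three, hvol] using this

/-- the (x,y) entry of the Gram matrix as an explicit sum -/
def gm (ξ : Fin 3 → V n) (x y : Fin 3) : ℂ := ∑ k, conj (ξ x k) * ξ y k

lemma meas_gm (x y : Fin 3) : Measurable (fun ξ : Fin 3 → V n => gm ξ x y) := by
  refine Finset.measurable_sum _ fun k _ => Measurable.mul ?_ ?_
  · have h1 : Measurable fun ξ : Fin 3 → V n => ξ x k :=
      (measurable_pi_apply k).comp (measurable_pi_apply x)
    exact continuous_star.measurable.comp h1
  · exact (measurable_pi_apply k).comp (measurable_pi_apply y)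

lemma ae_pi_sphere (hμ : IsUniformSphere n μ) :
    ∀ᵐ ξ ∂(Measure.pi fun _ : Fin 3 => μ), ∀ t, ∑ i, Complex.normSq (ξ t i) = 1 := by
  haveI := hμ.1
  rw [ae_all_iff]
  intro t
  exact (MeasureTheory.Measure.tendsto_eval_ae_ae (μ := fun _ : Fin 3 => μ) (i := t)).eventually hμ.2.1

lemma gm_bound (hμ : IsUniformSphere n μ) :
    ∀ᵐ ξ ∂(Measure.pi fun _ : Fin 3 => μ), ∀ x y, ‖gm ξ x y‖ ≤ 1 := by
  filter_upwards [ae_pi_sphere hμ] with ξ hξ x y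
  have h1 : ‖gm ξ x y‖ ≤ ∑ k, ‖ξ x k‖ * ‖ξ y k‖ := by
    refine (norm_sum_le _ _).trans_eq ?_
    exact Finset.sum_congr rfl fun k _ => by rw [norm_mul, Complex.norm_conj]
  have h2 : (∑ k, ‖ξ x k‖ * ‖ξ y k‖) ^ 2
      ≤ (∑ k, ‖ξ x k‖ ^ 2) * (∑ k, ‖ξ y k‖ ^ 2) :=
    Finset.sum_mul_sq_le_sq_mul_sq _ _ _
  have hx : (∑ k, ‖ξ x k‖ ^ 2) = 1 := by
    simp_rw [Complex.sq_norm]; exact hξ x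
  have hy : (∑ k, ‖ξ y k‖ ^ 2) = 1 := by
    simp_rw [Complex.sq_norm]; exact hξ y
  rw [hx, hy, mul_one] at h2
  have h3 : (0:ℝ) ≤ ∑ k, ‖ξ x k‖ * ‖ξ y k‖ :=
    Finset.sum_nonneg fun k _ => mul_nonneg (norm_nonneg _) (norm_nonneg _)
  nlinarith

lemma gm_symm (ξ : Fin 3 → V n) (x y : Fin 3) : gm ξ y x = conj (gm ξ x y) := by
  rw [gm, gm, map_sum]
  exact Finset.sum_congr rfl fun k _ => by
    rw [_root_.map_mul, Complex.conj_conj, mul_comm]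

lemma prod3_01 (μ : Measure (V n)) [IsProbabilityMeasure μ] (f g : V n → ℂ)
    (hf : Integrable f μ) (hg : Integrable g μ) :
    ∫ ξ : Fin 3 → V n, f (ξ 0) * g (ξ 1) ∂(Measure.pi fun _ => μ)
      = (∫ v, f v ∂μ) * ∫ v, g v ∂μ := by
  have h := prod3 μ f g (fun _ => 1) hf hg (integrable_const 1)
  simpa using h

lemma prod3_02 (μ : Measure (V n)) [IsProbabilityMeasure μ] (f g : V n → ℂ)
    (hf : Integrable f μ) (hg : Integrable g μ) :
    ∫ ξ : Fin 3 → V n, f (ξ 0) * g (ξ 2) ∂(Measure.pi fun _ => μ)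
      = (∫ v, f v ∂μ) * ∫ v, g v ∂μ := by
  have h := prod3 μ f (fun _ => 1) g hf (integrable_const 1) hg
  simpa using h

lemma prod3_12 (μ : Measure (V n)) [IsProbabilityMeasure μ] (f g : V n → ℂ)
    (hf : Integrable f μ) (hg : Integrable g μ) :
    ∫ ξ : Fin 3 → V n, f (ξ 1) * g (ξ 2) ∂(Measure.pi fun _ => μ)
      = (∫ v, f v ∂μ) * ∫ v, g v ∂μ := by
  have h := prod3 μ (fun _ => 1) f g (integrable_const 1) hf hg
  simpa using h

lemma int3_01 (μ : Measure (V n)) [IsProbabilityMeasure μ] (f g : V n → ℂ)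
    (hf : Integrable f μ) (hg : Integrable g μ) :
    Integrable (fun ξ : Fin 3 → V n => f (ξ 0) * g (ξ 1)) (Measure.pi fun _ => μ) := by
  have h := int3 μ f g (fun _ => 1) hf hg (integrable_const 1)
  simpa using h

lemma int3_02 (μ : Measure (V n)) [IsProbabilityMeasure μ] (f g : V n → ℂ)
    (hf : Integrable f μ) (hg : Integrable g μ) :
    Integrable (fun ξ : Fin 3 → V n => f (ξ 0) * g (ξ 2)) (Measure.pi fun _ => μ) := by
  have h := int3 μ f (fun _ => 1) g hf (integrable_const 1) hg
  simpa using h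

lemma int3_12 (μ : Measure (V n)) [IsProbabilityMeasure μ] (f g : V n → ℂ)
    (hf : Integrable f μ) (hg : Integrable g μ) :
    Integrable (fun ξ : Fin 3 → V n => f (ξ 1) * g (ξ 2)) (Measure.pi fun _ => μ) := by
  have h := int3 μ (fun _ => 1) f g (integrable_const 1) hf hg
  simpa using h

lemma T01 (hμ : IsUniformSphere n μ) (hn : (n : ℂ) ≠ 0) :
    ∫ ξ : Fin 3 → V n, gm ξ 0 1 * conj (gm ξ 0 1) ∂(Measure.pi fun _ : Fin 3 => μ)
      = (n : ℂ)⁻¹ := by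
  haveI := hμ.1
  have hInt : ∀ i j : Fin n, Integrable
      (fun ξ : Fin 3 → V n => (fun v : V n => conj (v i) * v j) (ξ 0)
        * (fun v : V n => v i * conj (v j)) (ξ 1)) (Measure.pi fun _ : Fin 3 => μ) :=
    fun i j => int3_01 μ _ _ (intm2 hμ i j) (intm1 hμ i j)
  have expand : (fun ξ : Fin 3 → V n => gm ξ 0 1 * conj (gm ξ 0 1))
      = fun ξ : Fin 3 → V n => ∑ i, ∑ j, (fun v : V n => conj (v i) * v j) (ξ 0)
        * (fun v : V n => v i * conj (v j)) (ξ 1) := by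
    funext ξ
    rw [gm, map_sum, Finset.sum_mul_sum]
    refine Finset.sum_congr rfl fun i _ => Finset.sum_congr rfl fun j _ => ?_
    simp only [_root_.map_mul, Complex.conj_conj]
    ring
  rw [expand, integral_finset_sum _ (fun i _ => integrable_finset_sum _ (fun j _ => hInt i j))]
  have step : ∀ i : Fin n, (∫ ξ : Fin 3 → V n, ∑ j, (fun v : V n => conj (v i) * v j) (ξ 0)
        * (fun v : V n => v i * conj (v j)) (ξ 1) ∂(Measure.pi fun _ : Fin 3 => μ))
      = ∑ j, (if i = j then (n:ℂ)⁻¹ else 0) * (if i = j then (n:ℂ)⁻¹ else 0) := by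
    intro i
    rw [integral_finset_sum _ (fun j _ => hInt i j)]
    refine Finset.sum_congr rfl fun j _ => ?_
    have h := prod3_01 μ (fun v : V n => conj (v i) * v j) (fun v : V n => v i * conj (v j))
      (intm2 hμ i j) (intm1 hμ i j)
    rw [mom' hμ i j, mom hμ i j] at h
    exact h
  rw [Finset.sum_congr rfl fun i _ => step i]
  simp only [ite_mul, zero_mul, mul_ite, mul_zero, Finset.sum_ite_eq, Finset.mem_univ, if_true]
  rw [Finset.sum_const, Finset.card_univ, Fintype.card_fin, nsmul_eq_mul]
  field_simp

lemma T02 (hμ : IsUniformSphere n μ) (hn : (n : ℂ) ≠ 0) :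
    ∫ ξ : Fin 3 → V n, gm ξ 0 2 * conj (gm ξ 0 2) ∂(Measure.pi fun _ : Fin 3 => μ)
      = (n : ℂ)⁻¹ := by
  haveI := hμ.1
  have hInt : ∀ i j : Fin n, Integrable
      (fun ξ : Fin 3 → V n => (fun v : V n => conj (v i) * v j) (ξ 0)
        * (fun v : V n => v i * conj (v j)) (ξ 2)) (Measure.pi fun _ : Fin 3 => μ) :=
    fun i j => int3_02 μ _ _ (intm2 hμ i j) (intm1 hμ i j)
  have expand : (fun ξ : Fin 3 → V n => gm ξ 0 2 * conj (gm ξ 0 2))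
      = fun ξ : Fin 3 → V n => ∑ i, ∑ j, (fun v : V n => conj (v i) * v j) (ξ 0)
        * (fun v : V n => v i * conj (v j)) (ξ 2) := by
    funext ξ
    rw [gm, map_sum, Finset.sum_mul_sum]
    refine Finset.sum_congr rfl fun i _ => Finset.sum_congr rfl fun j _ => ?_
    simp only [_root_.map_mul, Complex.conj_conj]
    ring
  rw [expand, integral_finset_sum _ (fun i _ => integrable_finset_sum _ (fun j _ => hInt i j))]
  have step : ∀ i : Fin n, (∫ ξ : Fin 3 → V n, ∑ j, (fun v : V n => conj (v i) * v j) (ξ 0)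
        * (fun v : V n => v i * conj (v j)) (ξ 2) ∂(Measure.pi fun _ : Fin 3 => μ))
      = ∑ j, (if i = j then (n:ℂ)⁻¹ else 0) * (if i = j then (n:ℂ)⁻¹ else 0) := by
    intro i
    rw [integral_finset_sum _ (fun j _ => hInt i j)]
    refine Finset.sum_congr rfl fun j _ => ?_
    have h := prod3_02 μ (fun v : V n => conj (v i) * v j) (fun v : V n => v i * conj (v j))
      (intm2 hμ i j) (intm1 hμ i j)
    rw [mom' hμ i j, mom hμ i j] at h
    exact h
  rw [Finset.sum_congr rfl fun i _ => step i]
  simp only [ite_mul, zero_mul, mul_ite, mul_zero, Finset.sum_ite_eq, Finset.mem_univ, if_true]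
  rw [Finset.sum_const, Finset.card_univ, Fintype.card_fin, nsmul_eq_mul]
  field_simp

lemma T12 (hμ : IsUniformSphere n μ) (hn : (n : ℂ) ≠ 0) :
    ∫ ξ : Fin 3 → V n, gm ξ 1 2 * conj (gm ξ 1 2) ∂(Measure.pi fun _ : Fin 3 => μ)
      = (n : ℂ)⁻¹ := by
  haveI := hμ.1
  have hInt : ∀ i j : Fin n, Integrable
      (fun ξ : Fin 3 → V n => (fun v : V n => conj (v i) * v j) (ξ 1)
        * (fun v : V n => v i * conj (v j)) (ξ 2)) (Measure.pi fun _ : Fin 3 => μ) :=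
    fun i j => int3_12 μ _ _ (intm2 hμ i j) (intm1 hμ i j)
  have expand : (fun ξ : Fin 3 → V n => gm ξ 1 2 * conj (gm ξ 1 2))
      = fun ξ : Fin 3 → V n => ∑ i, ∑ j, (fun v : V n => conj (v i) * v j) (ξ 1)
        * (fun v : V n => v i * conj (v j)) (ξ 2) := by
    funext ξ
    rw [gm, map_sum, Finset.sum_mul_sum]
    refine Finset.sum_congr rfl fun i _ => Finset.sum_congr rfl fun j _ => ?_
    simp only [_root_.map_mul, Complex.conj_conj]
    ring
  rw [expand, integral_finset_sum _ (fun i _ => integrable_finset_sum _ (fun j _ => hInt i j))]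
  have step : ∀ i : Fin n, (∫ ξ : Fin 3 → V n, ∑ j, (fun v : V n => conj (v i) * v j) (ξ 1)
        * (fun v : V n => v i * conj (v j)) (ξ 2) ∂(Measure.pi fun _ : Fin 3 => μ))
      = ∑ j, (if i = j then (n:ℂ)⁻¹ else 0) * (if i = j then (n:ℂ)⁻¹ else 0) := by
    intro i
    rw [integral_finset_sum _ (fun j _ => hInt i j)]
    refine Finset.sum_congr rfl fun j _ => ?_
    have h := prod3_12 μ (fun v : V n => conj (v i) * v j) (fun v : V n => v i * conj (v j))
      (intm2 hμ i j) (intm1 hμ i j)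
    rw [mom' hμ i j, mom hμ i j] at h
    exact h
  rw [Finset.sum_congr rfl fun i _ => step i]
  simp only [ite_mul, zero_mul, mul_ite, mul_zero, Finset.sum_ite_eq, Finset.mem_univ, if_true]
  rw [Finset.sum_const, Finset.card_univ, Fintype.card_fin, nsmul_eq_mul]
  field_simp

lemma Ttriple (hμ : IsUniformSphere n μ) (hn : (n : ℂ) ≠ 0) :
    ∫ ξ : Fin 3 → V n, gm ξ 0 1 * gm ξ 1 2 * conj (gm ξ 0 2) ∂(Measure.pi fun _ : Fin 3 => μ)
      = ((n : ℂ) ^ 2)⁻¹ := by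
  haveI := hμ.1
  have hInt : ∀ i j k : Fin n, Integrable
      (fun ξ : Fin 3 → V n => (fun v : V n => conj (v i) * v k) (ξ 0)
        * (fun v : V n => v i * conj (v j)) (ξ 1)
        * (fun v : V n => v j * conj (v k)) (ξ 2)) (Measure.pi fun _ : Fin 3 => μ) :=
    fun i j k => int3 μ (fun v : V n => conj (v i) * v k) (fun v : V n => v i * conj (v j))
      (fun v : V n => v j * conj (v k)) (intm2 hμ i k) (intm1 hμ i j) (intm1 hμ j k)
  have expand : (fun ξ : Fin 3 → V n => gm ξ 0 1 * gm ξ 1 2 * conj (gm ξ 0 2))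
      = fun ξ : Fin 3 → V n => ∑ i, ∑ j, ∑ k, (fun v : V n => conj (v i) * v k) (ξ 0)
        * (fun v : V n => v i * conj (v j)) (ξ 1)
        * (fun v : V n => v j * conj (v k)) (ξ 2) := by
    funext ξ
    rw [gm, gm, gm, map_sum, Finset.sum_mul_sum, Finset.sum_mul]
    refine Finset.sum_congr rfl fun i _ => ?_
    rw [Finset.sum_mul]
    refine Finset.sum_congr rfl fun j _ => ?_
    rw [Finset.mul_sum]
    refine Finset.sum_congr rfl fun k _ => ?_
    simp only [_root_.map_mul, Complex.conj_conj]
    ring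
  rw [expand, integral_finset_sum _ (fun i _ => integrable_finset_sum _
    (fun j _ => integrable_finset_sum _ (fun k _ => hInt i j k)))]
  have step : ∀ i : Fin n, (∫ ξ : Fin 3 → V n, ∑ j, ∑ k,
        (fun v : V n => conj (v i) * v k) (ξ 0)
        * (fun v : V n => v i * conj (v j)) (ξ 1)
        * (fun v : V n => v j * conj (v k)) (ξ 2) ∂(Measure.pi fun _ : Fin 3 => μ))
      = ∑ j, ∑ k, (if i = k then (n:ℂ)⁻¹ else 0) * (if i = j then (n:ℂ)⁻¹ else 0)
          * (if j = k then (n:ℂ)⁻¹ else 0) := by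
    intro i
    rw [integral_finset_sum _ (fun j _ => integrable_finset_sum _ (fun k _ => hInt i j k))]
    refine Finset.sum_congr rfl fun j _ => ?_
    rw [integral_finset_sum _ (fun k _ => hInt i j k)]
    refine Finset.sum_congr rfl fun k _ => ?_
    have h := prod3 μ (fun v : V n => conj (v i) * v k) (fun v : V n => v i * conj (v j))
      (fun v : V n => v j * conj (v k)) (intm2 hμ i k) (intm1 hμ i j) (intm1 hμ j k)
    rw [mom' hμ i k, mom hμ i j, mom hμ j k] at h
    exact h
  rw [Finset.sum_congr rfl fun i _ => step i]
  have inner : ∀ i : Fin n, ∑ j, ∑ k, (if i = k then (n:ℂ)⁻¹ else 0)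
      * (if i = j then (n:ℂ)⁻¹ else 0) * (if j = k then (n:ℂ)⁻¹ else 0)
      = (n:ℂ)⁻¹ * (n:ℂ)⁻¹ * (n:ℂ)⁻¹ := by
    intro i
    simp [ite_mul, mul_ite, Finset.sum_ite_eq, Finset.sum_ite_eq']
  rw [Finset.sum_congr rfl fun i _ => inner i, Finset.sum_const, Finset.card_univ,
    Fintype.card_fin, nsmul_eq_mul]
  field_simp

lemma grammat_eq_gm (ξ : Fin 3 → V n) (x y : Fin 3) : grammat ξ x y = gm ξ x y := by
  simp [grammat, gm, Matrix.mul_apply, Matrix.conjTranspose_apply]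

/-- `E[det(I₃ + c Ξ†Ξ)] = (1+c)³ − 3c²(1+c)/n + 2c³/n²` for `Ξ` with three
i.i.d. columns uniform on the unit sphere of `ℂ^n`. -/
theorem stmt6 (n : ℕ) (hn : 1 ≤ n) (μ : Measure (Fin n → ℂ)) (hμ : IsUniformSphere n μ)
    (c : ℝ) (hc : 0 < c) :
    (∫ ξ : Fin 3 → Fin n → ℂ,
        ((1 + (c : ℂ) • grammat ξ).det.re) ∂(Measure.pi fun _ : Fin 3 => μ))
      = (1 + c) ^ 3 - 3 * c ^ 2 * (1 + c) / n + 2 * c ^ 3 / n ^ 2 := by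
  haveI := hμ.1
  have hnC : (n : ℂ) ≠ 0 := Nat.cast_ne_zero.mpr (Nat.one_le_iff_ne_zero.mp hn)
  have hnR : (n : ℝ) ≠ 0 := Nat.cast_ne_zero.mpr (Nat.one_le_iff_ne_zero.mp hn)
  set Pm : Measure (Fin 3 → V n) := Measure.pi fun _ : Fin 3 => μ with hPm
  haveI : IsProbabilityMeasure Pm := by rw [hPm]; infer_instance
  -- a.e. identity for the determinant
  have hdet : ∀ᵐ ξ ∂Pm, (1 + (c : ℂ) • grammat ξ).det =
      ((1 + (c:ℂ))^3 - (c:ℂ)^2 * (1 + (c:ℂ)) *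
        (gm ξ 0 1 * conj (gm ξ 0 1) + gm ξ 0 2 * conj (gm ξ 0 2)
          + gm ξ 1 2 * conj (gm ξ 1 2)))
      + (c:ℂ)^3 * (gm ξ 0 1 * gm ξ 1 2 * conj (gm ξ 0 2)
          + conj (gm ξ 0 1 * gm ξ 1 2 * conj (gm ξ 0 2))) := by
    filter_upwards [ae_pi_sphere hμ] with ξ hξ
    have hdiag : ∀ t, gm ξ t t = 1 := by
      intro t
      rw [gm]
      have h0 : ∀ k, conj (ξ t k) * ξ t k = (Complex.normSq (ξ t k) : ℂ) := fun k => by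
        rw [mul_comm, Complex.mul_conj]
      rw [Finset.sum_congr rfl fun k _ => h0 k, ← Complex.ofReal_sum, hξ t]
      norm_num
    rw [Matrix.det_fin_three]
    simp only [Matrix.add_apply, Matrix.smul_apply, Matrix.one_apply, smul_eq_mul,
      grammat_eq_gm]
    rw [show gm ξ 1 0 = conj (gm ξ 0 1) from gm_symm ξ 0 1,
      show gm ξ 2 0 = conj (gm ξ 0 2) from gm_symm ξ 0 2,
      show gm ξ 2 1 = conj (gm ξ 1 2) from gm_symm ξ 1 2,
      hdiag 0, hdiag 1, hdiag 2]
    simp only [show ((0:Fin 3) = 1) ↔ False from by decide,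
      show ((0:Fin 3) = 2) ↔ False from by decide,
      show ((1:Fin 3) = 0) ↔ False from by decide,
      show ((1:Fin 3) = 2) ↔ False from by decide,
      show ((2:Fin 3) = 0) ↔ False from by decide,
      show ((2:Fin 3) = 1) ↔ False from by decide, if_false, if_true, _root_.map_mul,
      Complex.conj_conj]
    ring
  -- integrability of the pieces
  have hb := gm_bound hμ
  have int2 : ∀ x y : Fin 3,
      Integrable (fun ξ : Fin 3 → V n => gm ξ x y * conj (gm ξ x y)) Pm := by
    intro x y
    refine Integrable.mono' (integrable_const (1:ℝ)) ?_ ?_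
    · exact ((meas_gm x y).mul
        (continuous_star.measurable.comp (meas_gm x y))).aestronglyMeasurable
    · filter_upwards [hb] with ξ h
      have h1 := h x y
      simp only [norm_mul, Complex.norm_conj]
      nlinarith [norm_nonneg (gm ξ x y)]
  have int3a : Integrable (fun ξ : Fin 3 → V n =>
      gm ξ 0 1 * gm ξ 1 2 * conj (gm ξ 0 2)) Pm := by
    refine Integrable.mono' (integrable_const (1:ℝ)) ?_ ?_
    · exact (((meas_gm 0 1).mul (meas_gm 1 2)).mul
        (continuous_star.measurable.comp (meas_gm 0 2))).aestronglyMeasurable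
    · filter_upwards [hb] with ξ h
      have h1 := h 0 1; have h2 := h 1 2; have h3 := h 0 2
      simp only [norm_mul, Complex.norm_conj]
      exact mul_le_one₀ (mul_le_one₀ h1 (norm_nonneg _) h2) (norm_nonneg _) h3
  have int3b : Integrable (fun ξ : Fin 3 → V n =>
      conj (gm ξ 0 1 * gm ξ 1 2 * conj (gm ξ 0 2))) Pm := by
    refine Integrable.mono' (integrable_const (1:ℝ)) ?_ ?_
    · exact (continuous_star.measurable.comp (((meas_gm 0 1).mul (meas_gm 1 2)).mul
        (continuous_star.measurable.comp (meas_gm 0 2)))).aestronglyMeasurable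
    · filter_upwards [hb] with ξ h
      have h1 := h 0 1; have h2 := h 1 2; have h3 := h 0 2
      simp only [Complex.norm_conj, _root_.map_mul, norm_mul]
      exact mul_le_one₀ (mul_le_one₀ h1 (norm_nonneg _) h2) (norm_nonneg _) h3
  have hS : Integrable (fun ξ : Fin 3 → V n =>
      gm ξ 0 1 * conj (gm ξ 0 1) + gm ξ 0 2 * conj (gm ξ 0 2)
        + gm ξ 1 2 * conj (gm ξ 1 2)) Pm := ((int2 0 1).add (int2 0 2)).add (int2 1 2)
  have hT : Integrable (fun ξ : Fin 3 → V n =>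
      gm ξ 0 1 * gm ξ 1 2 * conj (gm ξ 0 2)
        + conj (gm ξ 0 1 * gm ξ 1 2 * conj (gm ξ 0 2))) Pm := int3a.add int3b
  have hIntD : Integrable (fun ξ : Fin 3 → V n =>
      ((1 + (c:ℂ))^3 - (c:ℂ)^2 * (1 + (c:ℂ)) *
        (gm ξ 0 1 * conj (gm ξ 0 1) + gm ξ 0 2 * conj (gm ξ 0 2)
          + gm ξ 1 2 * conj (gm ξ 1 2)))
      + (c:ℂ)^3 * (gm ξ 0 1 * gm ξ 1 2 * conj (gm ξ 0 2)
          + conj (gm ξ 0 1 * gm ξ 1 2 * conj (gm ξ 0 2)))) Pm :=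
    ((integrable_const _).sub (hS.const_mul _)).add (hT.const_mul _)
  -- compute the integral of D
  have hS12 : Integrable (fun ξ : Fin 3 → V n =>
      gm ξ 0 1 * conj (gm ξ 0 1) + gm ξ 0 2 * conj (gm ξ 0 2)) Pm :=
    (int2 0 1).add (int2 0 2)
  have hP1 : Integrable (fun ξ : Fin 3 → V n =>
      (1 + (c:ℂ))^3 - (c:ℂ)^2 * (1 + (c:ℂ)) *
        (gm ξ 0 1 * conj (gm ξ 0 1) + gm ξ 0 2 * conj (gm ξ 0 2)
          + gm ξ 1 2 * conj (gm ξ 1 2))) Pm :=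
    (integrable_const _).sub (hS.const_mul _)
  have hP2 : Integrable (fun ξ : Fin 3 → V n =>
      (c:ℂ)^3 * (gm ξ 0 1 * gm ξ 1 2 * conj (gm ξ 0 2)
          + conj (gm ξ 0 1 * gm ξ 1 2 * conj (gm ξ 0 2)))) Pm := hT.const_mul _
  have hP4 : Integrable (fun ξ : Fin 3 → V n =>
      (c:ℂ)^2 * (1 + (c:ℂ)) *
        (gm ξ 0 1 * conj (gm ξ 0 1) + gm ξ 0 2 * conj (gm ξ 0 2)
          + gm ξ 1 2 * conj (gm ξ 1 2))) Pm := hS.const_mul _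
  have hDval : ∫ ξ : Fin 3 → V n,
      (((1 + (c:ℂ))^3 - (c:ℂ)^2 * (1 + (c:ℂ)) *
        (gm ξ 0 1 * conj (gm ξ 0 1) + gm ξ 0 2 * conj (gm ξ 0 2)
          + gm ξ 1 2 * conj (gm ξ 1 2)))
      + (c:ℂ)^3 * (gm ξ 0 1 * gm ξ 1 2 * conj (gm ξ 0 2)
          + conj (gm ξ 0 1 * gm ξ 1 2 * conj (gm ξ 0 2)))) ∂Pm
      = ((1 + (c:ℂ))^3 - (c:ℂ)^2 * (1 + (c:ℂ)) * (3 * (n:ℂ)⁻¹))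
        + (c:ℂ)^3 * (2 * ((n:ℂ)^2)⁻¹) := by
    rw [integral_add hP1 hP2, integral_sub (integrable_const _) hP4, integral_const,
      integral_const_mul, integral_const_mul,
      integral_add hS12 (int2 1 2),
      integral_add (int2 0 1) (int2 0 2),
      integral_add int3a int3b, integral_conj, hPm,
      T01 hμ hnC, T02 hμ hnC, T12 hμ hnC, Ttriple hμ hnC]
    have hcj : conj (((n:ℂ)^2)⁻¹) = ((n:ℂ)^2)⁻¹ := by
      rw [map_inv₀, map_pow, Complex.conj_natCast]
    rw [hcj]
    simp only [probReal_univ, one_smul]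
    ring
  -- put it together
  have hre1 : ∫ ξ : Fin 3 → Fin n → ℂ, ((1 + (c : ℂ) • grammat ξ).det.re) ∂Pm
      = ∫ ξ : Fin 3 → V n,
      (((1 + (c:ℂ))^3 - (c:ℂ)^2 * (1 + (c:ℂ)) *
        (gm ξ 0 1 * conj (gm ξ 0 1) + gm ξ 0 2 * conj (gm ξ 0 2)
          + gm ξ 1 2 * conj (gm ξ 1 2)))
      + (c:ℂ)^3 * (gm ξ 0 1 * gm ξ 1 2 * conj (gm ξ 0 2)
          + conj (gm ξ 0 1 * gm ξ 1 2 * conj (gm ξ 0 2)))).re ∂Pm :=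
    integral_congr_ae (hdet.mono fun ξ h => _root_.congrArg Complex.re h)
  have hre2 := integral_re hIntD
  simp only [RCLike.re_to_complex] at hre2
  rw [hre1, hre2, hDval]
  have hcast : (((1 + (c:ℂ))^3 - (c:ℂ)^2 * (1 + (c:ℂ)) * (3 * (n:ℂ)⁻¹))
        + (c:ℂ)^3 * (2 * ((n:ℂ)^2)⁻¹))
      = (((1 + c) ^ 3 - 3 * c ^ 2 * (1 + c) / n + 2 * c ^ 3 / n ^ 2 : ℝ) : ℂ) := by
    push_cast
    field_simp
  rw [hcast, Complex.ofReal_re]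

end
end

section
/- Let n ≥ 1 and let ξ_1,…,ξ_5 be independent random vectors, each uniformly distributed on the unit sphere of ℂ^n, and let Ξ = [ξ_1 … ξ_5]. Then for every constant c > 0: E[det(I_5 + c·Ξ†Ξ)] = (1+c)⁵ − 10c²(1+c)³/n + 20c³(1+c)²/n² − c⁴(1+c)·(30/n³ − 15/n²) + c⁵·(24/n⁴ − 20/n³). -/
open MeasureTheory ProbabilityTheory Filter Finset Matrix

namespace Stmt8Aux


variable {n : ℕ} {μ : Measure (Fin n → ℂ)}

lemma measurable_entry (a b : Fin n) :
    Measurable fun v : Fin n → ℂ => (starRingEnd ℂ) (v a) * v b := by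
  have h1 : Measurable fun v : Fin n → ℂ => (starRingEnd ℂ) (v a) :=
    (RCLike.continuous_conj (K := ℂ)).measurable.comp (measurable_pi_apply a)
  exact h1.mul (measurable_pi_apply b)

lemma measurable_mulVec (U : Matrix (Fin n) (Fin n) ℂ) :
    Measurable fun v : Fin n → ℂ => U.mulVec v := by
  apply measurable_pi_lambda
  intro i
  simp only [Matrix.mulVec, dotProduct]
  exact Finset.measurable_sum _ fun j _ => (measurable_pi_apply j).const_mul _

/-- change of variables under a unitary -/
lemma integral_comp_unitary (hμ : IsUniformSphere n μ) {U : Matrix (Fin n) (Fin n) ℂ}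
    (hU : U ∈ Matrix.unitaryGroup (Fin n) ℂ) {f : (Fin n → ℂ) → ℂ} (hf : Measurable f) :
    ∫ v, f v ∂μ = ∫ v, f (U.mulVec v) ∂μ := by
  conv_lhs => rw [← hμ.2.2 ⟨U, hU⟩]
  exact integral_map (measurable_mulVec U).aemeasurable hf.aestronglyMeasurable

lemma integral_conj_mul_ne (hμ : IsUniformSphere n μ) {a b : Fin n} (hab : a ≠ b) :
    ∫ v, (starRingEnd ℂ) (v a) * v b ∂μ = 0 := by
  classical
  set d : Fin n → ℂ := fun i => if i = a then -1 else 1 with hd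
  have hU : Matrix.diagonal d ∈ Matrix.unitaryGroup (Fin n) ℂ := by
    rw [Matrix.mem_unitaryGroup_iff]
    rw [Matrix.star_eq_conjTranspose, Matrix.diagonal_conjTranspose]
    rw [Matrix.diagonal_mul_diagonal]
    have hds : (fun i => d i * star (d i)) = fun _ : Fin n => (1:ℂ) := by
      funext i
      simp only [hd]
      by_cases hia : i = a <;> simp [hia]
    simp only [Pi.star_apply]
    rw [show (fun i => d i * star (d i)) = ((1 : Fin n → ℂ)) from hds]
    exact Matrix.diagonal_one
  have key := integral_comp_unitary hμ hU (measurable_entry a b)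
  have heq : ∀ v : Fin n → ℂ,
      (starRingEnd ℂ) (((Matrix.diagonal d).mulVec v) a) * ((Matrix.diagonal d).mulVec v) b
        = -((starRingEnd ℂ) (v a) * v b) := by
    intro v
    rw [Matrix.mulVec_diagonal, Matrix.mulVec_diagonal]
    have hda : d a = -1 := by simp [hd]
    have hdb : d b = 1 := by simp [hd, Ne.symm hab]
    rw [hda, hdb]
    simp only [one_mul, _root_.map_mul, map_neg, _root_.map_one]
    ring
  simp only [heq] at key
  rw [integral_neg] at key
  exact add_self_eq_zero.mp (by linear_combination key)

/-- the permutation unitary -/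
lemma integral_diag_swap (hμ : IsUniformSphere n μ) (a b : Fin n) :
    ∫ v, (starRingEnd ℂ) (v a) * v a ∂μ = ∫ v, (starRingEnd ℂ) (v b) * v b ∂μ := by
  classical
  set e := Equiv.swap a b with he
  set U : Matrix (Fin n) (Fin n) ℂ := Matrix.of fun i j => if j = e i then 1 else 0 with hUdef
  have hmv : ∀ (v : Fin n → ℂ) (i : Fin n), U.mulVec v i = v (e i) := by
    intro v i
    simp only [Matrix.mulVec, dotProduct, hUdef, Matrix.of_apply]
    rw [Finset.sum_eq_single (e i)]
    · simp
    · intro j _ hj; simp [hj]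
    · intro h; exact absurd (Finset.mem_univ _) h
  have hU : U ∈ Matrix.unitaryGroup (Fin n) ℂ := by
    rw [Matrix.mem_unitaryGroup_iff']
    ext i j
    simp only [Matrix.mul_apply, Matrix.star_eq_conjTranspose, Matrix.conjTranspose_apply,
      hUdef, Matrix.of_apply, Matrix.one_apply]
    rw [Finset.sum_eq_single (e.symm i)]
    · simp only [Equiv.apply_symm_apply]
      by_cases hij : i = j
      · subst hij; simp [Matrix.one_apply]
      · simp [Matrix.one_apply, hij, Ne.symm hij]
    · intro k _ hk
      have : ¬ (i = e k) := fun h => hk (by rw [h, Equiv.symm_apply_apply])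
      simp [this]
    · intro h; exact absurd (Finset.mem_univ _) h
  have key := integral_comp_unitary hμ hU (measurable_entry b b)
  have : ∀ v : Fin n → ℂ,
      (starRingEnd ℂ) ((U.mulVec v) b) * (U.mulVec v) b = (starRingEnd ℂ) (v a) * v a := by
    intro v
    rw [hmv]
    rw [he, Equiv.swap_apply_right]
  simp only [this] at key
  exact key.symm

lemma norm_vi_le_one (v : Fin n → ℂ) (hv : ∑ i, Complex.normSq (v i) = 1) (i : Fin n) :
    ‖v i‖ ≤ 1 := by
  have h1 : Complex.normSq (v i) ≤ 1 := by
    rw [← hv]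
    exact Finset.single_le_sum (f := fun j => Complex.normSq (v j))
      (fun j _ => Complex.normSq_nonneg _) (Finset.mem_univ i)
  have h2 : ‖v i‖ ^ 2 ≤ 1 := by rwa [← Complex.sq_norm] at h1
  nlinarith [norm_nonneg (v i)]

lemma integrable_entry (hμ : IsUniformSphere n μ) (a b : Fin n) :
    Integrable (fun v : Fin n → ℂ => (starRingEnd ℂ) (v a) * v b) μ := by
  have := hμ.1
  apply Integrable.mono' (g := fun _ => (1:ℝ)) (integrable_const _)
    (measurable_entry a b).aestronglyMeasurable
  filter_upwards [hμ.2.1] with v hv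
  rw [norm_mul]
  calc ‖(starRingEnd ℂ) (v a)‖ * ‖v b‖ = ‖v a‖ * ‖v b‖ := by rw [RCLike.norm_conj]
    _ ≤ 1 * 1 := by
        apply mul_le_mul (norm_vi_le_one v hv a) (norm_vi_le_one v hv b) (norm_nonneg _) zero_le_one
    _ = 1 := by norm_num

/-- THE MOMENT LEMMA -/
lemma integral_conj_mul (hμ : IsUniformSphere n μ) (a b : Fin n) :
    ∫ v, (starRingEnd ℂ) (v a) * v b ∂μ = if a = b then (n : ℂ)⁻¹ else 0 := by
  have := hμ.1
  by_cases hab : a = b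
  · subst hab
    rw [if_pos rfl]
    have hn : 0 < n := a.pos
    have hsum : ∑ i : Fin n, ∫ v, (starRingEnd ℂ) (v i) * v i ∂μ = 1 := by
      rw [← integral_finset_sum _ (fun i _ => integrable_entry hμ i i)]
      have : ∫ v, (∑ i, (starRingEnd ℂ) (v i) * v i) ∂μ = ∫ _, (1:ℂ) ∂μ := by
        apply integral_congr_ae
        filter_upwards [hμ.2.1] with v hv
        have : ∀ i, (starRingEnd ℂ) (v i) * v i = (Complex.normSq (v i) : ℂ) := by
          intro i
          rw [mul_comm, Complex.mul_conj]
        simp only [this]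
        rw [← Complex.ofReal_sum, hv, Complex.ofReal_one]
      rw [this]
      simp
    have hconst : ∀ i : Fin n, ∫ v, (starRingEnd ℂ) (v i) * v i ∂μ
        = ∫ v, (starRingEnd ℂ) (v a) * v a ∂μ := fun i => integral_diag_swap hμ i a
    rw [Finset.sum_congr rfl (fun i _ => hconst i), Finset.sum_const, Finset.card_univ,
      Fintype.card_fin, nsmul_eq_mul] at hsum
    have hne : (n:ℂ) ≠ 0 := Nat.cast_ne_zero.mpr hn.ne'
    field_simp
    linear_combination hsum
  · rw [if_neg hab]
    exact integral_conj_mul_ne hμ hab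





/-- entry of the Gram matrix -/
noncomputable def gent (ξ : Fin 5 → Fin n → ℂ) (i j : Fin 5) : ℂ :=
  ∑ a, (starRingEnd ℂ) (ξ i a) * ξ j a

lemma grammat_apply (ξ : Fin 5 → Fin n → ℂ) (i j : Fin 5) :
    grammat ξ i j = gent ξ i j := by
  simp [grammat, gent, Matrix.mul_apply, Matrix.conjTranspose_apply]

lemma gent_diag {ξ : Fin 5 → Fin n → ℂ} {i : Fin 5}
    (h : ∑ a, Complex.normSq (ξ i a) = 1) : gent ξ i i = 1 := by
  unfold gent
  have : ∀ a, (starRingEnd ℂ) (ξ i a) * ξ i a = (Complex.normSq (ξ i a) : ℂ) := fun a => by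
    rw [mul_comm, Complex.mul_conj]
  simp only [this]
  rw [← Complex.ofReal_sum, h, Complex.ofReal_one]

lemma measurable_gent (i j : Fin 5) : Measurable fun ξ : Fin 5 → Fin n → ℂ => gent ξ i j := by
  unfold gent
  apply Finset.measurable_sum
  intro a _
  have h1 : Measurable fun ξ : Fin 5 → Fin n → ℂ => ξ i a :=
    (measurable_pi_apply a).comp (measurable_pi_apply i)
  have h2 : Measurable fun ξ : Fin 5 → Fin n → ℂ => ξ j a :=
    (measurable_pi_apply a).comp (measurable_pi_apply j)
  exact ((RCLike.continuous_conj (K := ℂ)).measurable.comp h1).mul h2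

lemma norm_gent_le {ξ : Fin 5 → Fin n → ℂ} {i j : Fin 5}
    (hi : ∑ a, Complex.normSq (ξ i a) = 1) (hj : ∑ a, Complex.normSq (ξ j a) = 1) :
    ‖gent ξ i j‖ ≤ 1 := by
  unfold gent
  calc ‖∑ a, (starRingEnd ℂ) (ξ i a) * ξ j a‖ ≤ ∑ a, ‖(starRingEnd ℂ) (ξ i a) * ξ j a‖ :=
        norm_sum_le _ _
    _ ≤ ∑ a, (Complex.normSq (ξ i a) + Complex.normSq (ξ j a)) / 2 := by
        apply Finset.sum_le_sum
        intro a _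
        rw [norm_mul, RCLike.norm_conj]
        have h1 : Complex.normSq (ξ i a) = ‖ξ i a‖ ^ 2 := by
          rw [← Complex.sq_norm]
        have h2 : Complex.normSq (ξ j a) = ‖ξ j a‖ ^ 2 := by
          rw [← Complex.sq_norm]
        rw [h1, h2]
        nlinarith [norm_nonneg (ξ i a), norm_nonneg (ξ j a), sq_nonneg (‖ξ i a‖ - ‖ξ j a‖)]
    _ = 1 := by
        rw [← Finset.sum_div, Finset.sum_add_distrib, hi, hj]
        norm_num

section Pi

variable {n : ℕ} {μ : Measure (Fin n → ℂ)}

/-- a.e. on the product, every column is on the sphere -/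
lemma ae_sphere_pi (hμ : IsUniformSphere n μ) :
    ∀ᵐ ξ : Fin 5 → Fin n → ℂ ∂(Measure.pi fun _ : Fin 5 => μ),
      ∀ i, ∑ a, Complex.normSq (ξ i a) = 1 := by
  rw [MeasureTheory.ae_all_iff]
  intro i
  have hnull : μ {v : Fin n → ℂ | ¬ (∑ a, Complex.normSq (v a) = 1)} = 0 := by
    have := hμ.2.1
    rwa [MeasureTheory.ae_iff] at this
  rw [MeasureTheory.ae_iff]
  haveI : IsProbabilityMeasure μ := hμ.1
  exact MeasureTheory.Measure.pi_eval_preimage_null (μ := fun _ : Fin 5 => μ) hnull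

/-- integrability of the coordinate monomials -/
lemma integrable_coord_monomial (hμ : IsUniformSphere n μ) (σ : Equiv.Perm (Fin 5))
    (q : Fin 5 → Fin n) :
    Integrable (fun ξ : Fin 5 → Fin n → ℂ =>
      ∏ i, (starRingEnd ℂ) (ξ (σ i) (q i)) * ξ i (q i)) (Measure.pi fun _ : Fin 5 => μ) := by
  haveI : IsProbabilityMeasure μ := hμ.1
  have hmeas : Measurable (fun ξ : Fin 5 → Fin n → ℂ =>
      ∏ i, (starRingEnd ℂ) (ξ (σ i) (q i)) * ξ i (q i)) := by
    apply Finset.measurable_prod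
    intro i _
    have h1 : Measurable fun ξ : Fin 5 → Fin n → ℂ => ξ (σ i) (q i) :=
      (measurable_pi_apply _).comp (measurable_pi_apply _)
    have h2 : Measurable fun ξ : Fin 5 → Fin n → ℂ => ξ i (q i) :=
      (measurable_pi_apply _).comp (measurable_pi_apply _)
    exact ((RCLike.continuous_conj (K := ℂ)).measurable.comp h1).mul h2
  apply Integrable.mono' (g := fun _ => (1:ℝ)) (integrable_const _) hmeas.aestronglyMeasurable
  filter_upwards [ae_sphere_pi hμ] with ξ hξ
  rw [norm_prod]
  apply Finset.prod_le_one (fun i _ => norm_nonneg _)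
  intro i _
  rw [norm_mul, RCLike.norm_conj]
  calc ‖ξ (σ i) (q i)‖ * ‖ξ i (q i)‖ ≤ 1 * 1 :=
        mul_le_mul (norm_vi_le_one _ (hξ (σ i)) _) (norm_vi_le_one _ (hξ i) _)
          (norm_nonneg _) zero_le_one
    _ = 1 := by norm_num

/-- integrability of the permutation products of Gram entries -/
lemma integrable_P (hμ : IsUniformSphere n μ) (σ : Equiv.Perm (Fin 5)) :
    Integrable (fun ξ : Fin 5 → Fin n → ℂ => ∏ i, gent ξ (σ i) i)
      (Measure.pi fun _ : Fin 5 => μ) := by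
  haveI : IsProbabilityMeasure μ := hμ.1
  have hmeas : Measurable (fun ξ : Fin 5 → Fin n → ℂ => ∏ i, gent ξ (σ i) i) :=
    Finset.measurable_prod _ (fun i _ => measurable_gent _ _)
  apply Integrable.mono' (g := fun _ => (1:ℝ)) (integrable_const _) hmeas.aestronglyMeasurable
  filter_upwards [ae_sphere_pi hμ] with ξ hξ
  rw [norm_prod]
  apply Finset.prod_le_one (fun i _ => norm_nonneg _)
  exact fun i _ => norm_gent_le (hξ (σ i)) (hξ i)

/-- the integral of a single coordinate monomial factorizes -/
lemma integral_coord_monomial (hμ : IsUniformSphere n μ) (σ : Equiv.Perm (Fin 5))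
    (q : Fin 5 → Fin n) :
    ∫ ξ : Fin 5 → Fin n → ℂ, (∏ i, (starRingEnd ℂ) (ξ (σ i) (q i)) * ξ i (q i))
        ∂(Measure.pi fun _ : Fin 5 => μ)
      = if (∀ j, q (σ j) = q j) then ((n:ℂ)⁻¹)^5 else 0 := by
  haveI : IsProbabilityMeasure μ := hμ.1
  have hsplit : ∀ ξ : Fin 5 → Fin n → ℂ,
      (∏ i, (starRingEnd ℂ) (ξ (σ i) (q i)) * ξ i (q i))
        = ∏ j, ((starRingEnd ℂ) ((ξ j) (q (σ.symm j))) * (ξ j) (q j)) := by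
    intro ξ
    rw [Finset.prod_mul_distrib, Finset.prod_mul_distrib]
    congr 1
    have := Equiv.prod_comp σ (fun j => (starRingEnd ℂ) (ξ j (q (σ.symm j))))
    rw [← this]
    apply Finset.prod_congr rfl
    intro i _
    rw [Equiv.symm_apply_apply]
  simp only [hsplit]
  letI : MeasureSpace (Fin n → ℂ) := ⟨μ⟩
  haveI : SigmaFinite (volume : Measure (Fin n → ℂ)) := by
    have : IsProbabilityMeasure (volume : Measure (Fin n → ℂ)) := hμ.1
    infer_instance
  have fub := MeasureTheory.integral_fintype_prod_eq_prod (𝕜 := ℂ) (ι := Fin 5)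
    (fun j (v : Fin n → ℂ) => (starRingEnd ℂ) (v (q (σ.symm j))) * v (q j))
    (μ := fun _ => (volume : Measure (Fin n → ℂ)))
  rw [show (Measure.pi fun _ : Fin 5 => μ) = (Measure.pi fun _ : Fin 5 => (volume : Measure (Fin n → ℂ))) from rfl]
  rw [fub]
  have hmom : ∀ j : Fin 5, ∫ v : Fin n → ℂ, (starRingEnd ℂ) (v (q (σ.symm j))) * v (q j)
      = if q (σ.symm j) = q j then (n:ℂ)⁻¹ else 0 := by
    intro j
    exact integral_conj_mul hμ _ _
  rw [Finset.prod_congr rfl (fun j _ => hmom j)]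
  by_cases hq : ∀ j, q (σ j) = q j
  · have hq' : ∀ j, q (σ.symm j) = q j := by
      intro j
      have := hq (σ.symm j)
      rw [Equiv.apply_symm_apply] at this
      exact this.symm
    rw [if_pos hq]
    rw [Finset.prod_congr rfl (fun j _ => if_pos (hq' j))]
    simp
  · rw [if_neg hq]
    push_neg at hq
    obtain ⟨j, hj⟩ := hq
    apply Finset.prod_eq_zero (Finset.mem_univ (σ j))
    rw [if_neg]
    rw [Equiv.symm_apply_apply]
    exact fun h => hj h.symm

end Pi






variable (σ : Equiv.Perm (Fin 5))

/-- number of fixed points -/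
def pfix : ℕ := (univ.filter fun i => σ i = i).card

/-- number of orbits (counted via minimal representatives) -/
def pcyc : ℕ := (univ.filter fun x : Fin 5 => ∀ k ∈ Finset.range 5, x ≤ (σ ^ k) x).card

/-- orbit relation with bounded exponent -/
def orel (x y : Fin 5) : Prop := ∃ k < 5, (σ ^ k) x = y

lemma exists_period (x : Fin 5) : ∃ d, 0 < d ∧ d ≤ 5 ∧ (σ ^ d) x = x := by
  have h : ¬ Function.Injective (fun k : Fin 6 => (σ ^ (k : ℕ)) x) := by
    intro h
    have := Fintype.card_le_of_injective _ h
    simp at this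
  rw [Function.not_injective_iff] at h
  obtain ⟨a, b, hab, hne⟩ := h
  rcases Ne.lt_or_gt hne with hlt | hlt
  · refine ⟨(b : ℕ) - a, by omega, by omega, ?_⟩
    apply (σ ^ (a : ℕ)).injective
    have : σ ^ (a:ℕ) * σ ^ ((b:ℕ) - a) = σ ^ (b:ℕ) := by
      rw [← pow_add]; congr 1; omega
    calc (σ ^ (a:ℕ)) ((σ ^ ((b:ℕ) - (a:ℕ))) x) = (σ ^ (a:ℕ) * σ ^ ((b:ℕ) - a)) x := rfl
      _ = (σ ^ (b:ℕ)) x := by rw [this]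
      _ = (σ ^ (a:ℕ)) x := hab.symm
  · refine ⟨(a : ℕ) - b, by omega, by omega, ?_⟩
    apply (σ ^ (b : ℕ)).injective
    have : σ ^ (b:ℕ) * σ ^ ((a:ℕ) - b) = σ ^ (a:ℕ) := by
      rw [← pow_add]; congr 1; omega
    calc (σ ^ (b:ℕ)) ((σ ^ ((a:ℕ) - (b:ℕ))) x) = (σ ^ (b:ℕ) * σ ^ ((a:ℕ) - b)) x := rfl
      _ = (σ ^ (a:ℕ)) x := by rw [this]
      _ = (σ ^ (b:ℕ)) x := hab

lemma pow_fix_mul {x : Fin 5} {d : ℕ} (hd : (σ ^ d) x = x) (q : ℕ) : (σ ^ (d * q)) x = x := by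
  induction q with
  | zero => simp
  | succ m ih =>
      have : σ ^ (d * (m+1)) = σ ^ (d * m) * σ ^ d := by rw [← pow_add]; ring_nf
      rw [this]
      show (σ ^ (d*m)) ((σ ^ d) x) = x
      rw [hd, ih]

lemma pow_mod_apply {x : Fin 5} {d : ℕ} (hd0 : 0 < d) (hd : (σ ^ d) x = x) (k : ℕ) :
    (σ ^ k) x = (σ ^ (k % d)) x := by
  conv_lhs => rw [← Nat.div_add_mod k d]
  have : σ ^ (d * (k / d) + k % d) = σ ^ (k % d) * σ ^ (d * (k / d)) := by
    rw [← pow_add]; ring_nf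
  rw [this]
  show (σ ^ (k % d)) ((σ ^ (d * (k/d))) x) = _
  rw [pow_fix_mul σ hd]

lemma orel_refl (x : Fin 5) : orel σ x x := ⟨0, by norm_num, by simp⟩

lemma orel_symm {x y : Fin 5} (h : orel σ x y) : orel σ y x := by
  obtain ⟨k, hk, rfl⟩ := h
  obtain ⟨d, hd0, hd5, hdx⟩ := exists_period σ x
  have hred : (σ ^ k) x = (σ ^ (k % d)) x := pow_mod_apply σ hd0 hdx k
  rcases Nat.eq_zero_or_pos (k % d) with h0 | hpos
  · refine ⟨0, by norm_num, ?_⟩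
    simp [hred, h0]
  · have hlt := Nat.mod_lt k hd0
    refine ⟨d - k % d, by omega, ?_⟩
    rw [hred]
    have : σ ^ (d - k % d) * σ ^ (k % d) = σ ^ d := by
      rw [← pow_add]; congr 1; omega
    calc (σ ^ (d - k % d)) ((σ ^ (k % d)) x) = (σ ^ (d - k % d) * σ ^ (k % d)) x := rfl
      _ = x := by rw [this, hdx]

lemma orel_trans {x y z : Fin 5} (h1 : orel σ x y) (h2 : orel σ y z) : orel σ x z := by
  obtain ⟨k, hk, rfl⟩ := h1
  obtain ⟨j, hj, rfl⟩ := h2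
  obtain ⟨d, hd0, hd5, hdx⟩ := exists_period σ x
  have hlt := Nat.mod_lt (j + k) hd0
  refine ⟨(j + k) % d, by omega, ?_⟩
  rw [← pow_mod_apply σ hd0 hdx (j + k)]
  rw [pow_add]
  rfl

/-- the orbit of `x` as a finset -/
def orb (x : Fin 5) : Finset (Fin 5) := (Finset.range 5).image fun k => (σ ^ k) x

lemma mem_orb {x y : Fin 5} : y ∈ orb σ x ↔ orel σ x y := by
  simp [orb, orel]

lemma orb_nonempty (x : Fin 5) : (orb σ x).Nonempty :=
  ⟨x, (mem_orb σ).2 (orel_refl σ x)⟩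

/-- the minimal representative of the orbit of `x` -/
def mrep (x : Fin 5) : Fin 5 := (orb σ x).min' (orb_nonempty σ x)

lemma orel_mrep (x : Fin 5) : orel σ x (mrep σ x) :=
  (mem_orb σ).1 ((orb σ x).min'_mem _)

lemma orb_eq_of_orel {x y : Fin 5} (h : orel σ x y) : orb σ x = orb σ y := by
  ext z
  rw [mem_orb, mem_orb]
  exact ⟨fun hz => orel_trans σ (orel_symm σ h) hz, fun hz => orel_trans σ h hz⟩

lemma mrep_eq_of_orel {x y : Fin 5} (h : orel σ x y) : mrep σ x = mrep σ y := by
  unfold mrep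
  congr 1
  exact orb_eq_of_orel σ h

lemma mrep_mem_R (x : Fin 5) :
    mrep σ x ∈ univ.filter fun x : Fin 5 => ∀ k ∈ Finset.range 5, x ≤ (σ ^ k) x := by
  rw [mem_filter]
  refine ⟨mem_univ _, fun k hk => ?_⟩
  rw [mem_range] at hk
  apply Finset.min'_le
  rw [orb_eq_of_orel σ (orel_mrep σ x), mem_orb]
  exact ⟨k, hk, rfl⟩

lemma mrep_eq_self {x : Fin 5}
    (hx : x ∈ univ.filter fun x : Fin 5 => ∀ k ∈ Finset.range 5, x ≤ (σ ^ k) x) :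
    mrep σ x = x := by
  rw [mem_filter] at hx
  apply le_antisymm
  · exact Finset.min'_le _ _ ((mem_orb σ).2 (orel_refl σ x))
  · obtain ⟨k, hk, hkx⟩ := orel_mrep σ x
    rw [← hkx]
    exact hx.2 k (mem_range.2 hk)

lemma mrep_apply (x : Fin 5) : mrep σ (σ x) = mrep σ x :=
  (mrep_eq_of_orel σ ⟨1, by norm_num, by simp⟩).symm

lemma q_pow {n : ℕ} {q : Fin 5 → Fin n} (hq : ∀ j, q (σ j) = q j) (k : ℕ) (x : Fin 5) :
    q ((σ ^ k) x) = q x := by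
  induction k with
  | zero => simp
  | succ m ih =>
      have : (σ ^ (m+1)) x = σ ((σ ^ m) x) := by
        rw [pow_succ']; rfl
      rw [this, hq, ih]

set_option maxHeartbeats 1000000 in
/-- KEY COUNTING LEMMA -/
lemma card_invariant (n : ℕ) :
    ((univ : Finset (Fin 5 → Fin n)).filter fun q => ∀ j, q (σ j) = q j).card = n ^ pcyc σ := by
  classical
  set R := (univ.filter fun x : Fin 5 => ∀ k ∈ Finset.range 5, x ≤ (σ ^ k) x) with hR
  have e : {q : Fin 5 → Fin n // ∀ j, q (σ j) = q j} ≃ ({x // x ∈ R} → Fin n) :=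
    { toFun := fun q r => q.1 r.1
      invFun := fun g =>
        ⟨fun x => g ⟨mrep σ x, mrep_mem_R σ x⟩, by
          intro j
          exact congrArg g (Subtype.ext (mrep_apply σ j))⟩
      left_inv := by
        intro q
        apply Subtype.ext
        funext x
        obtain ⟨k, hk, hkx⟩ := orel_mrep σ x
        show q.1 (mrep σ x) = q.1 x
        rw [← hkx, q_pow σ q.2]
      right_inv := by
        intro g
        funext r
        show g ⟨mrep σ r.1, _⟩ = g r
        congr 1
        exact Subtype.ext (mrep_eq_self σ r.2) }
  have h1 : ((univ : Finset (Fin 5 → Fin n)).filter fun q => ∀ j, q (σ j) = q j).card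
      = Fintype.card {q : Fin 5 → Fin n // ∀ j, q (σ j) = q j} :=
    (Fintype.card_subtype _).symm
  rw [h1, Fintype.card_congr e, Fintype.card_fun, Fintype.card_coe, Fintype.card_fin]
  rfl


/-- the statistic of a permutation -/
def pstat (σ : Equiv.Perm (Fin 5)) : ℤˣ × ℕ × ℕ := (Equiv.Perm.sign σ, pfix σ, pcyc σ)

section IntegralP

variable {n : ℕ} {μ : Measure (Fin n → ℂ)}

lemma integral_P (hμ : IsUniformSphere n μ) (σ : Equiv.Perm (Fin 5)) :
    ∫ ξ : Fin 5 → Fin n → ℂ, (∏ i, gent ξ (σ i) i) ∂(Measure.pi fun _ : Fin 5 => μ)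
      = (n:ℂ)^(pcyc σ) * ((n:ℂ)⁻¹)^5 := by
  haveI : IsProbabilityMeasure μ := hμ.1
  have hexp : ∀ ξ : Fin 5 → Fin n → ℂ, (∏ i, gent ξ (σ i) i)
      = ∑ q : Fin 5 → Fin n, ∏ i, (starRingEnd ℂ) (ξ (σ i) (q i)) * ξ i (q i) := by
    intro ξ
    unfold gent
    exact Fintype.prod_sum _
  simp only [hexp]
  rw [integral_finset_sum _ (fun q _ => integrable_coord_monomial hμ σ q)]
  rw [Finset.sum_congr rfl (fun q _ => integral_coord_monomial hμ σ q)]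
  rw [Finset.sum_ite, Finset.sum_const, Finset.sum_const_zero, add_zero]
  rw [card_invariant σ n]
  rw [nsmul_eq_mul, Nat.cast_pow]

lemma det_expand (c : ℝ) {ξ : Fin 5 → Fin n → ℂ}
    (hd : ∀ i, ∑ a, Complex.normSq (ξ i a) = 1) :
    (1 + (c:ℂ) • grammat ξ).det
      = ∑ σ : Equiv.Perm (Fin 5), ((Equiv.Perm.sign σ : ℤ) : ℂ) *
          ((1+(c:ℂ))^(pfix σ) * (c:ℂ)^(5 - pfix σ) * ∏ i, gent ξ (σ i) i) := by
  rw [Matrix.det_apply]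
  simp only [Units.smul_def, zsmul_eq_mul]
  apply Finset.sum_congr rfl
  intro σ _
  congr 1
  have hMe : ∀ i j : Fin 5, (1 + (c:ℂ) • grammat ξ) i j
      = (if i = j then 1 else 0) + (c:ℂ) * gent ξ i j := by
    intro i j
    rw [Matrix.add_apply, Matrix.smul_apply, grammat_apply, Matrix.one_apply, smul_eq_mul]
  rw [Finset.prod_congr rfl (fun i _ => hMe (σ i) i)]
  rw [← Finset.prod_filter_mul_prod_filter_not univ (fun i => σ i = i)]
  have h1 : ∏ i ∈ filter (fun i => σ i = i) univ,
      ((if σ i = i then 1 else 0) + (c:ℂ) * gent ξ (σ i) i) = (1+(c:ℂ))^(pfix σ) := by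
    rw [Finset.prod_congr rfl (g := fun _ => 1+(c:ℂ)) (fun i hi => by
      rw [Finset.mem_filter] at hi
      rw [if_pos hi.2, hi.2, gent_diag (hd i), mul_one])]
    rw [Finset.prod_const]
    rfl
  have h2 : ∏ i ∈ filter (fun i => ¬ σ i = i) univ,
      ((if σ i = i then 1 else 0) + (c:ℂ) * gent ξ (σ i) i)
      = (c:ℂ)^(5 - pfix σ) * ∏ i ∈ filter (fun i => ¬ σ i = i) univ, gent ξ (σ i) i := by
    rw [Finset.prod_congr rfl (g := fun i => (c:ℂ) * gent ξ (σ i) i) (fun i hi => by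
      rw [Finset.mem_filter] at hi
      rw [if_neg hi.2, zero_add])]
    rw [Finset.prod_mul_distrib, Finset.prod_const]
    congr 2
    have := Finset.card_filter_add_card_filter_not (s := univ)
      (p := fun i : Fin 5 => σ i = i)
    simp only [Finset.card_univ, Fintype.card_fin] at this
    unfold pfix
    omega
  have h3 : ∏ i, gent ξ (σ i) i
      = ∏ i ∈ filter (fun i => ¬ σ i = i) univ, gent ξ (σ i) i := by
    rw [← Finset.prod_filter_mul_prod_filter_not univ (fun i => σ i = i)]
    rw [Finset.prod_congr rfl (g := fun _ => (1:ℂ)) (fun i hi => by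
      rw [Finset.mem_filter] at hi
      rw [hi.2, gent_diag (hd i)])]
    rw [Finset.prod_const, one_pow, one_mul]
  rw [h1, h2, h3]
  ring

lemma integral_det_complex (hμ : IsUniformSphere n μ) (c : ℝ) :
    ∫ ξ : Fin 5 → Fin n → ℂ,
        (∑ σ : Equiv.Perm (Fin 5), ((Equiv.Perm.sign σ : ℤ) : ℂ) *
          ((1+(c:ℂ))^(pfix σ) * (c:ℂ)^(5 - pfix σ) * ∏ i, gent ξ (σ i) i))
        ∂(Measure.pi fun _ : Fin 5 => μ)
      = ∑ σ : Equiv.Perm (Fin 5), ((Equiv.Perm.sign σ : ℤ) : ℂ) *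
          ((1+(c:ℂ))^(pfix σ) * (c:ℂ)^(5 - pfix σ) * ((n:ℂ)^(pcyc σ) * ((n:ℂ)⁻¹)^5)) := by
  haveI : IsProbabilityMeasure μ := hμ.1
  rw [integral_finset_sum _ (fun σ _ => by
    have := ((integrable_P hμ σ).const_mul
      (((Equiv.Perm.sign σ : ℤ) : ℂ) * ((1+(c:ℂ))^(pfix σ) * (c:ℂ)^(5 - pfix σ))))
    convert this using 2 with ξ
    ring)]
  apply Finset.sum_congr rfl
  intro σ _
  have : (fun ξ : Fin 5 → Fin n → ℂ => ((Equiv.Perm.sign σ : ℤ) : ℂ) *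
      ((1+(c:ℂ))^(pfix σ) * (c:ℂ)^(5 - pfix σ) * ∏ i, gent ξ (σ i) i))
      = fun ξ => (((Equiv.Perm.sign σ : ℤ) : ℂ) * ((1+(c:ℂ))^(pfix σ) * (c:ℂ)^(5 - pfix σ)))
          * ∏ i, gent ξ (σ i) i := by
    funext ξ; ring
  rw [this, MeasureTheory.integral_const_mul, integral_P hμ σ]
  ring

end IntegralP



set_option maxRecDepth 10000 in
lemma img_pstat : (univ : Finset (Equiv.Perm (Fin 5))).image pstat
    = ({(1,5,5),(-1,3,4),(1,2,3),(1,1,3),(-1,1,2),(-1,0,2),(1,0,1)} : Finset (ℤˣ × ℕ × ℕ)) := by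
  decide

lemma card_c1 : #(univ.filter fun σ : Equiv.Perm (Fin 5) => pstat σ = (1,5,5)) = 1 := by decide
lemma card_c2 : #(univ.filter fun σ : Equiv.Perm (Fin 5) => pstat σ = (-1,3,4)) = 10 := by decide
lemma card_c3 : #(univ.filter fun σ : Equiv.Perm (Fin 5) => pstat σ = (1,2,3)) = 20 := by decide
lemma card_c4 : #(univ.filter fun σ : Equiv.Perm (Fin 5) => pstat σ = (1,1,3)) = 15 := by decide
lemma card_c5 : #(univ.filter fun σ : Equiv.Perm (Fin 5) => pstat σ = (-1,1,2)) = 30 := by decide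
lemma card_c6 : #(univ.filter fun σ : Equiv.Perm (Fin 5) => pstat σ = (-1,0,2)) = 20 := by decide
lemma card_c7 : #(univ.filter fun σ : Equiv.Perm (Fin 5) => pstat σ = (1,0,1)) = 24 := by decide




lemma final_sum (n : ℕ) (hn : 1 ≤ n) (c : ℝ) :
    ∑ σ : Equiv.Perm (Fin 5), ((Equiv.Perm.sign σ : ℤ) : ℂ) *
        ((1+(c:ℂ))^(pfix σ) * (c:ℂ)^(5 - pfix σ) * ((n:ℂ)^(pcyc σ) * ((n:ℂ)⁻¹)^5))
      = Complex.ofReal ((1 + c) ^ 5 - 10 * c ^ 2 * (1 + c) ^ 3 / n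
          + 20 * c ^ 3 * (1 + c) ^ 2 / n ^ 2
          - c ^ 4 * (1 + c) * (30 / n ^ 3 - 15 / n ^ 2)
          + c ^ 5 * (24 / n ^ 4 - 20 / n ^ 3)) := by
  classical
  have hne : (n:ℂ) ≠ 0 := Nat.cast_ne_zero.mpr (by omega)
  set g : ℤˣ × ℕ × ℕ → ℂ := fun t => ((t.1 : ℤ) : ℂ) *
    ((1+(c:ℂ))^t.2.1 * (c:ℂ)^(5 - t.2.1) * ((n:ℂ)^t.2.2 * ((n:ℂ)⁻¹)^5)) with hg
  have h0 : (∑ σ : Equiv.Perm (Fin 5), ((Equiv.Perm.sign σ : ℤ) : ℂ) *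
      ((1+(c:ℂ))^(pfix σ) * (c:ℂ)^(5 - pfix σ) * ((n:ℂ)^(pcyc σ) * ((n:ℂ)⁻¹)^5)))
      = ∑ σ : Equiv.Perm (Fin 5), g (pstat σ) := rfl
  rw [h0, Finset.sum_comp g pstat, img_pstat]
  rw [Finset.sum_insert (by decide), Finset.sum_insert (by decide),
    Finset.sum_insert (by decide), Finset.sum_insert (by decide),
    Finset.sum_insert (by decide), Finset.sum_insert (by decide), Finset.sum_singleton]
  rw [card_c1, card_c2, card_c3, card_c4, card_c5, card_c6, card_c7]
  have hcan : ∀ k : ℕ, k ≤ 5 → (n:ℂ)^k * ((n:ℂ)⁻¹)^5 = 1 / (n:ℂ)^(5-k) := by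
    intro k hk
    have h5 : (n:ℂ)^5 = (n:ℂ)^k * (n:ℂ)^(5-k) := by
      rw [← pow_add]
      congr 1
      omega
    rw [inv_pow, h5, mul_inv, ← mul_assoc, mul_inv_cancel₀ (pow_ne_zero _ hne), one_mul,
      one_div]
  simp only [hg, nsmul_eq_mul]
  rw [hcan 5 (by norm_num), hcan 4 (by norm_num), hcan 3 (by norm_num),
    hcan 2 (by norm_num), hcan 1 (by norm_num)]
  norm_num
  push_cast
  simp only [div_eq_mul_inv, ← inv_pow]
  ring


end Stmt8Aux

/-- `E[det(I₅ + c Ξ†Ξ)] = (1+c)⁵ − 10c²(1+c)³/n + 20c³(1+c)²/n²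
− c⁴(1+c)(30/n³ − 15/n²) + c⁵(24/n⁴ − 20/n³)` for `Ξ` with five i.i.d. columns
uniform on the unit sphere of `ℂ^n`. -/
theorem stmt8 (n : ℕ) (hn : 1 ≤ n) (μ : Measure (Fin n → ℂ)) (hμ : IsUniformSphere n μ)
    (c : ℝ) (hc : 0 < c) :
    (∫ ξ : Fin 5 → Fin n → ℂ,
        ((1 + (c : ℂ) • grammat ξ).det.re) ∂(Measure.pi fun _ : Fin 5 => μ))
      = (1 + c) ^ 5 - 10 * c ^ 2 * (1 + c) ^ 3 / n + 20 * c ^ 3 * (1 + c) ^ 2 / n ^ 2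
          - c ^ 4 * (1 + c) * (30 / n ^ 3 - 15 / n ^ 2)
          + c ^ 5 * (24 / n ^ 4 - 20 / n ^ 3) := by
  classical
  haveI : IsProbabilityMeasure μ := hμ.1
  have h1 : ∫ ξ : Fin 5 → Fin n → ℂ,
        ((1 + (c : ℂ) • grammat ξ).det.re) ∂(Measure.pi fun _ : Fin 5 => μ)
      = ∫ ξ : Fin 5 → Fin n → ℂ,
          (∑ σ : Equiv.Perm (Fin 5), ((Equiv.Perm.sign σ : ℤ) : ℂ) *
            ((1+(c:ℂ))^(Stmt8Aux.pfix σ) * (c:ℂ)^(5 - Stmt8Aux.pfix σ) *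
              ∏ i, Stmt8Aux.gent ξ (σ i) i)).re ∂(Measure.pi fun _ : Fin 5 => μ) := by
    apply integral_congr_ae
    filter_upwards [Stmt8Aux.ae_sphere_pi hμ] with ξ hξ
    rw [Stmt8Aux.det_expand c hξ]
  rw [h1]
  have hint : Integrable (fun ξ : Fin 5 → Fin n → ℂ =>
      ∑ σ : Equiv.Perm (Fin 5), ((Equiv.Perm.sign σ : ℤ) : ℂ) *
        ((1+(c:ℂ))^(Stmt8Aux.pfix σ) * (c:ℂ)^(5 - Stmt8Aux.pfix σ) *
          ∏ i, Stmt8Aux.gent ξ (σ i) i)) (Measure.pi fun _ : Fin 5 => μ) := by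
    apply integrable_finset_sum
    intro σ _
    have := ((Stmt8Aux.integrable_P hμ σ).const_mul
      (((Equiv.Perm.sign σ : ℤ) : ℂ) *
        ((1+(c:ℂ))^(Stmt8Aux.pfix σ) * (c:ℂ)^(5 - Stmt8Aux.pfix σ))))
    convert this using 2 with ξ
    · rfl
    ring
  have h2 := integral_re (μ := Measure.pi fun _ : Fin 5 => μ) hint
  simp only [RCLike.re_to_complex] at h2
  rw [h2, Stmt8Aux.integral_det_complex hμ c, Stmt8Aux.final_sum n hn c, Complex.ofReal_re]
end
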